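/- arXiv:1608.03686 — 3 statements merged into one kernel-verified Lean document; each statement's English description precedes it below -/
import Mathlib

section
/- Under the noiseless sparse reduced-rank regression setup, each right singular vector is exactly recovered from the corresponding left singular vector by the formula v_k = (1 / (u_kᵀ XᵀX u_k)) · Y*ᵀ X u_k for every k = 1, …, r. -/
open Matrix

lemma vecMulVec_transpose' {m n : Type*} (a : m → ℝ) (b : n → ℝ) :
    (vecMulVec a b)ᵀ = vecMulVec b a := by
  ext i j; simp [vecMulVec_apply, mul_comm]

lemma vecMulVec_mulVec' {m n : Type*} [Fintype n] (a : m → ℝ) (b : n → ℝ) (w : n → ℝ) :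
    vecMulVec a b *ᵥ w = (b ⬝ᵥ w) • a := by
  ext i
  simp [mulVec, vecMulVec_apply, dotProduct, Finset.mul_sum, mul_assoc, mul_comm, mul_left_comm]

lemma sum_mulVec' {ι m n : Type*} [Fintype n] (s : Finset ι) (M : ι → Matrix m n ℝ)
    (w : n → ℝ) : (∑ j ∈ s, M j) *ᵥ w = ∑ j ∈ s, M j *ᵥ w := by
  ext i
  simp only [mulVec, dotProduct, Finset.sum_apply, Matrix.sum_apply, Finset.sum_mul]
  rw [Finset.sum_comm]

/-- Under the noiseless setup, each right singular vector is exactly recovered: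
`v k = (1 / (u_kᵀ XᵀX u_k)) · Y*ᵀ X u_k`. -/
theorem seed_right_singular_vector_recovery
    {n p q r : ℕ} (X : Matrix (Fin n) (Fin p) ℝ)
    (u : Fin r → (Fin p → ℝ)) (v : Fin r → (Fin q → ℝ))
    (hu_norm : ∀ k, u k ⬝ᵥ u k = 1)
    (hXu : ∀ k, X *ᵥ u k ≠ 0)
    (hPorth : ∀ j k, j ≠ k → u j ⬝ᵥ ((Xᵀ * X) *ᵥ u k) = 0)
    (hv_ne : ∀ k, v k ≠ 0)
    (hvorth : ∀ j k, j ≠ k → v j ⬝ᵥ v k = 0)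
    (C : Matrix (Fin p) (Fin q) ℝ)
    (hC : C = ∑ k, vecMulVec (u k) (v k))
    (Y : Matrix (Fin n) (Fin q) ℝ) (hY : Y = X * C) :
    ∀ k, v k = (1 / (u k ⬝ᵥ ((Xᵀ * X) *ᵥ u k))) • ((Yᵀ * X) *ᵥ u k) := by
  intro k
  set w : Fin p → ℝ := (Xᵀ * X) *ᵥ u k with hw
  have hd : u k ⬝ᵥ w = (X *ᵥ u k) ⬝ᵥ (X *ᵥ u k) := by
    rw [hw, ← Matrix.mulVec_mulVec, Matrix.dotProduct_mulVec, Matrix.vecMul_transpose]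
  have hdne : u k ⬝ᵥ w ≠ 0 := by
    rw [hd]
    exact fun h => hXu k (dotProduct_self_eq_zero.mp h)
  have hmain : (Yᵀ * X) *ᵥ u k = (u k ⬝ᵥ w) • v k := by
    have : Yᵀ * X = Cᵀ * (Xᵀ * X) := by
      rw [hY, Matrix.transpose_mul, Matrix.mul_assoc]
    rw [this, ← Matrix.mulVec_mulVec, ← hw, hC, Matrix.transpose_sum]
    simp only [vecMulVec_transpose']
    rw [sum_mulVec']
    simp only [vecMulVec_mulVec']
    rw [Finset.sum_eq_single k]
    · intro j _ hj
      rw [hPorth j k hj, zero_smul]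
    · intro h; exact absurd (Finset.mem_univ k) h
  rw [hmain, smul_smul, one_div, inv_mul_cancel₀ hdne, one_smul]
end

section
/- A generalized eigenvector reduces the squared Frobenius loss by exactly its eigenvalue: let X be a real n×p matrix, Y a real n×q matrix, and u ∈ ℝ^p with X u ≠ 0 satisfying XᵀYYᵀX u = λ XᵀX u for some real λ. Set v = (1/‖Xu‖₂²) Yᵀ X u. Then ‖Y − X u vᵀ‖_F² = ‖Y‖_F² − λ. -/
open Matrix

/-- The squared Frobenius norm of a real matrix: `‖A‖_F² = Σ_{i,j} A_{ij}²`. -/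
def frobSq {m n : Type*} [Fintype m] [Fintype n] (A : Matrix m n ℝ) : ℝ :=
  ∑ i, ∑ j, (A i j) ^ 2

/-- A generalized eigenvector reduces the squared Frobenius loss by exactly its
eigenvalue: `‖Y − X u vᵀ‖_F² = ‖Y‖_F² − λ`. -/
theorem seed_generalized_eigenvector_loss_reduction
    {n p q : ℕ} (X : Matrix (Fin n) (Fin p) ℝ) (Y : Matrix (Fin n) (Fin q) ℝ)
    (u : Fin p → ℝ) (hXu : X *ᵥ u ≠ 0) (lam : ℝ)
    (heig : (Xᵀ * Y * Yᵀ * X) *ᵥ u = lam • ((Xᵀ * X) *ᵥ u))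
    (v : Fin q → ℝ)
    (hv : v = (1 / ((X *ᵥ u) ⬝ᵥ (X *ᵥ u))) • ((Yᵀ * X) *ᵥ u)) :
    frobSq (Y - X * vecMulVec u v) = frobSq Y - lam := by
  set w := X *ᵥ u with hw
  set z := Yᵀ *ᵥ w with hz
  have hs : w ⬝ᵥ w ≠ 0 := by
    rw [Ne, dotProduct_self_eq_zero]; exact hXu
  have hvz : v = (1 / (w ⬝ᵥ w)) • z := by
    rw [hv, hz, hw, ← Matrix.mulVec_mulVec]
  have hc : z ⬝ᵥ z = lam * (w ⬝ᵥ w) := by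
    have h := congrArg (fun x => u ⬝ᵥ x) heig
    simp only [← Matrix.mulVec_mulVec, dotProduct_smul, smul_eq_mul,
      Matrix.dotProduct_mulVec, Matrix.vecMul_transpose, ← hw] at h
    rw [hz, Matrix.mulVec_transpose, ← h, dotProduct_comm _ w,
      Matrix.dotProduct_mulVec]
  have key : ∀ i j, (Y - X * vecMulVec u v) i j = Y i j - w i * v j := by
    intro i j
    simp [Matrix.sub_apply, Matrix.mul_apply, Matrix.vecMulVec_apply, hw,
      Matrix.mulVec, dotProduct, Finset.sum_mul, mul_assoc]
  have h1 : ∑ i, ∑ j, Y i j * w i * v j = z ⬝ᵥ v := by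
    rw [Finset.sum_comm]
    simp only [dotProduct, hz, Matrix.mulVec, dotProduct, Matrix.transpose_apply,
      Finset.sum_mul]
  have h2 : ∑ i : Fin n, w i ^ 2 * ∑ j, v j ^ 2 = (w ⬝ᵥ w) * (v ⬝ᵥ v) := by
    rw [← Finset.sum_mul]
    congr 1 <;> simp [dotProduct, sq]
  have hexp : frobSq (Y - X * vecMulVec u v)
      = frobSq Y - 2 * (z ⬝ᵥ v) + (w ⬝ᵥ w) * (v ⬝ᵥ v) := by
    unfold frobSq
    simp only [key]
    have e : ∀ i j, (Y i j - w i * v j) ^ 2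
        = Y i j ^ 2 - 2 * (Y i j * w i * v j) + w i ^ 2 * v j ^ 2 := by
      intros; ring
    simp only [e, Finset.sum_add_distrib, Finset.sum_sub_distrib, ← Finset.mul_sum]
    rw [h1, h2]

  rw [hexp, hvz]
  simp only [smul_dotProduct, dotProduct_smul, smul_eq_mul, hc]
  field_simp
  ring
end

section
/- When X has full row rank, the nonzero generalized eigenvalues of the SEED problem coincide with the nonzero eigenvalues of YYᵀ: let X be a real n×p matrix whose associated linear map from ℝ^p to ℝ^n is surjective (equivalently, rank(X) = n), let Y be a real n×q matrix, and let λ ≠ 0 be real. Then there exists a nonzero w ∈ ℝ^n with YYᵀ w = λ w if and only if there exists u ∈ ℝ^p with X u ≠ 0 and XᵀYYᵀX u = λ XᵀX u. -/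
open Matrix

lemma seed_transpose_injective {n p : ℕ} (X : Matrix (Fin n) (Fin p) ℝ)
    (hX : Function.Surjective (fun u : Fin p → ℝ => X *ᵥ u)) :
    Function.Injective (fun v : Fin n → ℝ => Xᵀ *ᵥ v) := by
  have : ∀ v : Fin n → ℝ, Xᵀ *ᵥ v = 0 → v = 0 := by
    intro v hv
    funext i
    obtain ⟨u, hu⟩ := hX (Pi.single i 1)
    simp only at hu
    have h1 : v ⬝ᵥ (X *ᵥ u) = 0 := by
      rw [Matrix.dotProduct_mulVec, ← Matrix.mulVec_transpose, hv]
      simp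
    rw [hu] at h1
    simpa using h1
  intro a b hab
  have := this (a - b) (by
    simp only at hab
    rw [Matrix.mulVec_sub, hab, sub_self])
  have := sub_eq_zero.mp this
  exact this

/-- When `X` has full row rank, the nonzero generalized eigenvalues of the SEED
problem `XᵀYYᵀX u = λ XᵀX u` coincide with the nonzero eigenvalues of `YYᵀ`. -/
theorem seed_nonzero_eigenvalues_full_row_rank
    {n p q : ℕ} (X : Matrix (Fin n) (Fin p) ℝ)
    (hX : Function.Surjective (fun u : Fin p → ℝ => X *ᵥ u))
    (Y : Matrix (Fin n) (Fin q) ℝ) (lam : ℝ) (hlam : lam ≠ 0) :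
    (∃ w : Fin n → ℝ, w ≠ 0 ∧ (Y * Yᵀ) *ᵥ w = lam • w) ↔
      (∃ u : Fin p → ℝ, X *ᵥ u ≠ 0 ∧
        (Xᵀ * Y * Yᵀ * X) *ᵥ u = lam • ((Xᵀ * X) *ᵥ u)) := by
  constructor
  · rintro ⟨w, hw, hew⟩
    obtain ⟨u, hu⟩ := hX w
    simp only at hu
    refine ⟨u, by rw [hu]; exact hw, ?_⟩
    have : (Xᵀ * Y * Yᵀ * X) *ᵥ u = Xᵀ *ᵥ ((Y * Yᵀ) *ᵥ (X *ᵥ u)) := by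
      simp [Matrix.mulVec_mulVec, Matrix.mul_assoc]
    rw [this, hu, hew, Matrix.mulVec_smul, ← Matrix.mulVec_mulVec, hu]
  · rintro ⟨u, hu, heu⟩
    refine ⟨X *ᵥ u, hu, ?_⟩
    apply seed_transpose_injective X hX
    have h2 : Xᵀ *ᵥ ((Y * Yᵀ) *ᵥ (X *ᵥ u)) = (Xᵀ * Y * Yᵀ * X) *ᵥ u := by
      simp [Matrix.mulVec_mulVec, Matrix.mul_assoc]
    simp only
    rw [h2, heu, Matrix.mulVec_smul, Matrix.mulVec_mulVec]
end
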